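/- If functions f, g, h on the lattice satisfy the three bilinear equations (p−a)f̂̃h + (q+a)f·ĥ̃ − (p+q)f̂·h̃ = 0, (p+a)f·ĥ̃ + (q−a)f̂̃h − (p+q)f̃·ĥ = 0, and (p−a)f̃ĥ − (q−a)f̂h̃ − (p−q)f·ĥ̃ = 0, then they also satisfy (p+a)f̂h̃ − (q+a)f̃ĥ − (p−q)f̂̃h = 0, wherever the relevant quantities are nonzero (assuming f, h nonvanishing). -/
import Mathlib

/-- Among the four bilinear forms of the lpmKdV equation, any three imply the
fourth: if `f, h` (nowhere zero) satisfy
`(p−a)f̂̃h + (q+a)f·ĥ̃ − (p+q)f̂·h̃ = 0`,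
`(p+a)f·ĥ̃ + (q−a)f̂̃h − (p+q)f̃·ĥ = 0`, and
`(p−a)f̃ĥ − (q−a)f̂h̃ − (p−q)f·ĥ̃ = 0`,
then `(p+a)f̂h̃ − (q+a)f̃ĥ − (p−q)f̂̃h = 0`. -/
theorem stmt_14 (p q a : ℝ) (hpq : p + q ≠ 0) (hpq' : p - q ≠ 0)
    (f h : ℤ → ℤ → ℝ)
    (hf : ∀ n m : ℤ, f n m ≠ 0) (hh : ∀ n m : ℤ, h n m ≠ 0)
    (H11 : ∀ n m : ℤ, (p - a) * f (n+1) (m+1) * h n m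
      + (q + a) * f n m * h (n+1) (m+1) - (p + q) * f n (m+1) * h (n+1) m = 0)
    (H12 : ∀ n m : ℤ, (p + a) * f n m * h (n+1) (m+1)
      + (q - a) * f (n+1) (m+1) * h n m - (p + q) * f (n+1) m * h n (m+1) = 0)
    (H21 : ∀ n m : ℤ, (p - a) * f (n+1) m * h n (m+1)
      - (q - a) * f n (m+1) * h (n+1) m - (p - q) * f n m * h (n+1) (m+1) = 0) :
    ∀ n m : ℤ, (p + a) * f n (m+1) * h (n+1) m
      - (q + a) * f (n+1) m * h n (m+1) - (p - q) * f (n+1) (m+1) * h n m = 0 := by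
  intro n m
  have key : (p + q) * ((p + a) * f n (m+1) * h (n+1) m
      - (q + a) * f (n+1) m * h n (m+1) - (p - q) * f (n+1) (m+1) * h n m) = 0 := by
    linear_combination (q + a) * H12 n m - (p + a) * H11 n m
  rcases mul_eq_zero.mp key with h0 | h0
  · exact absurd h0 hpq
  · exact h0
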